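/- Let b ∈ C with b ≠ 0 and q(b) = 0, and let Λ be a type-2 vertex lattice with b ∈ Λ \ πΛ. Then there exists b' ∈ Λ with h(b',b') = 0 and h(b,b') = π⁻¹, and for any such b' one has Λ = O_F·b + O_F·b'; in particular, every type-2 vertex lattice containing a nonzero isotropic vector primitively has an O_F-basis with Gram matrix [[0, π⁻¹],[−π⁻¹, 0]]. -/

import Mathlib

noncomputable section

attribute [local instance] Classical.propDecidable

variable {F : Type} [Field F]

/-- Membership in the valuation ring `O_F = {x : F | x = 0 ∨ v x ≥ 0}`. -/
def inO (v : F → ℤ) (x : F) : Prop := x = 0 ∨ 0 ≤ v x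

/-- The Hermitian form `h(x, y) = x₁ · σ(y₂) + x₂ · σ(y₁)` on `C = F²`. -/
def herm (σ : F →+* F) (x y : F × F) : F := x.1 * σ y.2 + x.2 * σ y.1

/-- The `O_F`-span of two vectors of `C = F²`. -/
def spanL (v : F → ℤ) (u w : F × F) : Set (F × F) :=
  {x | ∃ a b : F, inO v a ∧ inO v b ∧ x = a • u + b • w}

/-- An `O_F`-lattice in `C`: a free rank-2 `O_F`-submodule spanning `C` over `F`. -/
def IsLattice (v : F → ℤ) (Λ : Set (F × F)) : Prop :=
  ∃ u w : F × F, LinearIndependent F ![u, w] ∧ Λ = spanL v u w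

/-- The dual lattice `Λ^♯ = {x ∈ C | h(x, Λ) ⊆ O_F}`. -/
def dualL (σ : F →+* F) (v : F → ℤ) (Λ : Set (F × F)) : Set (F × F) :=
  {x | ∀ y ∈ Λ, inO v (herm σ x y)}

/-- A vertex lattice of type 0: a self-dual lattice. -/
def IsVertex0 (σ : F →+* F) (v : F → ℤ) (Λ : Set (F × F)) : Prop :=
  IsLattice v Λ ∧ dualL σ v Λ = Λ

/-- A vertex lattice of type 2: a lattice with `Λ^♯ = π Λ`
(equivalently `πΛ ⊆ Λ^♯ ⊆ Λ` with `Λ/Λ^♯` two-dimensional over the residue field). -/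
def IsVertex2 (σ : F →+* F) (π : F) (v : F → ℤ) (Λ : Set (F × F)) : Prop :=
  IsLattice v Λ ∧ dualL σ v Λ = (fun x => π • x) '' Λ

/-- A vertex lattice (of type 0 or type 2). -/
def IsVertex (σ : F →+* F) (π : F) (v : F → ℤ) (Λ : Set (F × F)) : Prop :=
  IsVertex0 σ v Λ ∨ IsVertex2 σ π v Λ

/-- `nIs π b Λ n` says that `n = n(b, Λ)` is the largest integer `m` with `π⁻ᵐ b ∈ Λ`. -/
def nIs (π : F) (b : F × F) (Λ : Set (F × F)) (n : ℤ) : Prop :=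
  IsGreatest {m : ℤ | (π ^ (-m)) • b ∈ Λ} n

/-- Adjacency of type-2 vertex lattices: distinct, with intersection a type-0 vertex lattice. -/
def AdjV (σ : F →+* F) (π : F) (v : F → ℤ) (Λ Λ' : Set (F × F)) : Prop :=
  IsVertex2 σ π v Λ ∧ IsVertex2 σ π v Λ' ∧ Λ ≠ Λ' ∧ IsVertex0 σ v (Λ ∩ Λ')

/-- There is a walk of length `k` between `Λ` and `Λ'` in the Bruhat–Tits tree. -/
def WalkN (σ : F →+* F) (π : F) (v : F → ℤ) (k : ℕ) (Λ Λ' : Set (F × F)) : Prop :=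
  ∃ f : ℕ → Set (F × F), f 0 = Λ ∧ f k = Λ' ∧ ∀ i < k, AdjV σ π v (f i) (f (i + 1))

/-- `dGIs σ π v Λ Λ' k` : the graph distance `d_G(Λ, Λ')` equals `k`. -/
def dGIs (σ : F →+* F) (π : F) (v : F → ℤ) (Λ Λ' : Set (F × F)) (k : ℕ) : Prop :=
  IsLeast {j : ℕ | WalkN σ π v j Λ Λ'} k

/-- `P` is a type-2 "hull" of the vertex lattice `Λ`: `P = Λ` when `Λ` has type 2,
and `P` is a type-2 vertex lattice containing `Λ` when `Λ` has type 0. -/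
def HullOf (σ : F →+* F) (π : F) (v : F → ℤ) (Λ P : Set (F × F)) : Prop :=
  (IsVertex2 σ π v Λ ∧ P = Λ) ∨ (IsVertex0 σ v Λ ∧ IsVertex2 σ π v P ∧ Λ ⊆ P)

/-- `DTwice σ π v Λ Λ' m` : twice the tree distance `D(Λ, Λ')` equals `m`
(type-0 vertex lattices are midpoints of edges, contributing `1/2` each). -/
def DTwice (σ : F →+* F) (π : F) (v : F → ℤ) (Λ Λ' : Set (F × F)) (m : ℕ) : Prop :=
  (Λ = Λ' ∧ m = 0) ∨
  (Λ ≠ Λ' ∧ ∃ k : ℕ,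
    IsLeast {j : ℕ | ∃ P Q, HullOf σ π v Λ P ∧ HullOf σ π v Λ' Q ∧ WalkN σ π v j P Q} k ∧
    (m : ℤ) = 2 * k + (if IsVertex0 σ v Λ then 1 else 0) +
      (if IsVertex0 σ v Λ' then 1 else 0))

/-- `g ∈ GL₂(O_F)`. -/
def InGL2O (v : F → ℤ) (g : Matrix (Fin 2) (Fin 2) F) : Prop :=
  (∀ i j, inO v (g i j)) ∧
    ∃ g' : Matrix (Fin 2) (Fin 2) F, (∀ i j, inO v (g' i j)) ∧ g * g' = 1 ∧ g' * g = 1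

/-- Equivalence of Hermitian matrices: `T ≈ T'` iff `gᵗ T ḡ = T'` for some `g ∈ GL₂(O_F)`. -/
def HermEquiv (σ : F →+* F) (v : F → ℤ) (T T' : Matrix (Fin 2) (Fin 2) F) : Prop :=
  ∃ g, InGL2O v g ∧ g.transpose * T * g.map (fun x => σ x) = T'

/-- `u` is a unit of `O_{F₀}`. -/
def IsUnitO₀ (σ : F →+* F) (v : F → ℤ) (u : F) : Prop :=
  σ u = u ∧ u ≠ 0 ∧ v u = 0

/-- `x` is a norm from `F^×`. -/
def IsNorm (σ : F →+* F) (x : F) : Prop := ∃ y : F, y ≠ 0 ∧ x = y * σ y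


section Helpers17

lemma herm_smul_left (σ : F →+* F) (a : F) (x y : F × F) :
    herm σ (a • x) y = a * herm σ x y := by
  simp [herm, Prod.smul_fst, Prod.smul_snd, smul_eq_mul]; ring

lemma herm_smul_right (σ : F →+* F) (a : F) (x y : F × F) :
    herm σ x (a • y) = σ a * herm σ x y := by
  simp [herm, Prod.smul_fst, Prod.smul_snd, smul_eq_mul, map_mul]; ring

lemma herm_add_left (σ : F →+* F) (x x' y : F × F) :
    herm σ (x + x') y = herm σ x y + herm σ x' y := by
  simp [herm]; ring

lemma herm_add_right (σ : F →+* F) (x y y' : F × F) :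
    herm σ x (y + y') = herm σ x y + herm σ x y' := by
  simp [herm, map_add]; ring

lemma herm_conj (σ : F →+* F) (hinv : ∀ x, σ (σ x) = x) (x y : F × F) :
    herm σ y x = σ (herm σ x y) := by
  simp [herm, map_add, map_mul, hinv]; ring

lemma herm_zero_left (σ : F →+* F) (y : F × F) : herm σ 0 y = 0 := by simp [herm]
lemma herm_zero_right (σ : F →+* F) (y : F × F) : herm σ y 0 = 0 := by simp [herm]

lemma spanL_comb (v : F → ℤ)
    (hOa : ∀ x y : F, inO v x → inO v y → inO v (x + y))
    (hOm : ∀ x y : F, inO v x → inO v y → inO v (x * y))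
    {u w x y : F × F} (hx : x ∈ spanL v u w) (hy : y ∈ spanL v u w)
    {a c : F} (ha : inO v a) (hc : inO v c) : a • x + c • y ∈ spanL v u w := by
  obtain ⟨a₁, b₁, ha₁, hb₁, rfl⟩ := hx
  obtain ⟨a₂, b₂, ha₂, hb₂, rfl⟩ := hy
  exact ⟨a*a₁ + c*a₂, a*b₁ + c*b₂, hOa _ _ (hOm _ _ ha ha₁) (hOm _ _ hc ha₂),
    hOa _ _ (hOm _ _ ha hb₁) (hOm _ _ hc hb₂), by module⟩

lemma linIndep_iff_det (u w : F × F) :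
    LinearIndependent F ![u, w] ↔ u.1 * w.2 - u.2 * w.1 ≠ 0 := by
  rw [LinearIndependent.pair_iff]
  constructor
  · intro h hdet
    have e1 := h w.2 (-u.2) (by
      refine Prod.ext ?_ ?_ <;> simp [smul_eq_mul]
      · linear_combination hdet
      · ring)
    have e2 := h w.1 (-u.1) (by
      refine Prod.ext ?_ ?_ <;> simp [smul_eq_mul]
      · ring
      · linear_combination -hdet)
    have hu1 : u.1 = 0 := by have := e2.2; simpa using this
    have hu2 : u.2 = 0 := by have := e1.2; simpa using this
    have e3 := h 1 0 (by
      refine Prod.ext ?_ ?_ <;> simp [smul_eq_mul, hu1, hu2])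
    exact one_ne_zero e3.1
  · intro hdet s t hst
    have h1 : s * u.1 + t * w.1 = 0 := by
      have := congrArg Prod.fst hst; simpa [smul_eq_mul] using this
    have h2 : s * u.2 + t * w.2 = 0 := by
      have := congrArg Prod.snd hst; simpa [smul_eq_mul] using this
    have hs : s = 0 := by
      have : s * (u.1 * w.2 - u.2 * w.1) = 0 := by linear_combination w.2 * h1 - w.1 * h2
      rcases mul_eq_zero.1 this with h | h
      · exact h
      · exact absurd h hdet
    refine ⟨hs, ?_⟩
    subst hs
    simp at h1 h2
    rcases h1 with h1 | h1
    · exact h1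
    rcases h2 with h2 | h2
    · exact h2
    · exact absurd (by rw [h1, h2]; ring) hdet

lemma repr_det {u w : F × F} (hdet : u.1 * w.2 - u.2 * w.1 ≠ 0) (x : F × F) :
    ∃ α β : F, x = α • u + β • w := by
  refine ⟨(x.1 * w.2 - x.2 * w.1) / (u.1 * w.2 - u.2 * w.1),
          (u.1 * x.2 - u.2 * x.1) / (u.1 * w.2 - u.2 * w.1), ?_⟩
  have hdet' : w.2 * u.1 - w.1 * u.2 ≠ 0 := by intro h; apply hdet; linear_combination h
  apply Prod.ext <;> simp [smul_eq_mul] <;> field_simp <;> ring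

lemma spanL_swap (v : F → ℤ) (u w : F × F) : spanL v u w = spanL v w u := by
  ext x
  constructor <;> rintro ⟨a, b, ha, hb, rfl⟩ <;> exact ⟨b, a, hb, ha, by module⟩

lemma spanL_change (v : F → ℤ)
    (hOa : ∀ x y : F, inO v x → inO v y → inO v (x + y))
    (hOm : ∀ x y : F, inO v x → inO v y → inO v (x * y))
    (hOn : ∀ x : F, inO v x → inO v (-x))
    {u w : F × F} {a c : F} (ha : inO v a) (hainv : inO v a⁻¹) (ha0 : a ≠ 0)
    (hc : inO v c) :
    spanL v u w = spanL v (a • u + c • w) w := by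
  ext x
  constructor
  · rintro ⟨α, β, hα, hβ, rfl⟩
    refine ⟨α * a⁻¹, β + -(α * a⁻¹ * c),
      hOm _ _ hα hainv, hOa _ _ hβ (hOn _ (hOm _ _ (hOm _ _ hα hainv) hc)), ?_⟩
    match_scalars <;> field_simp <;> ring
  · rintro ⟨α, β, hα, hβ, rfl⟩
    exact ⟨α * a, α * c + β, hOm _ _ hα ha, hOa _ _ (hOm _ _ hα hc) hβ, by module⟩

end Helpers17


theorem statement17
    (σ : F →+* F) (π : F) (v : F → ℤ)
    (hinv : ∀ x, σ (σ x) = x)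
    (hσπ : σ π = -π)
    (hπ : π ≠ 0)
    (h2 : (2 : F) ≠ 0)
    (hvπ : v π = 1)
    (hv2 : v (2 : F) = 0)
    (hvσ : ∀ x, v (σ x) = v x)
    (hvmul : ∀ x y : F, x ≠ 0 → y ≠ 0 → v (x * y) = v x + v y)
    (hvadd : ∀ x y : F, x ≠ 0 → y ≠ 0 → x + y ≠ 0 → min (v x) (v y) ≤ v (x + y))
    (heven : ∀ x : F, σ x = x → x ≠ 0 → Even (v x))
    (b : F × F) (hb0 : b ≠ 0) (hiso : herm σ b b = 0)
    (Λ : Set (F × F)) (hΛ : IsVertex2 σ π v Λ)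
    (hbin : b ∈ Λ) (hbout : b ∉ (fun x => π • x) '' Λ) :
    (∃ b' ∈ Λ, herm σ b' b' = 0 ∧ herm σ b b' = π⁻¹) ∧
    (∀ b' ∈ Λ, herm σ b' b' = 0 → herm σ b b' = π⁻¹ →
      LinearIndependent F ![b, b'] ∧ Λ = spanL v b b') ∧
    (∃ w₀ w₁ : F × F, LinearIndependent F ![w₀, w₁] ∧ Λ = spanL v w₀ w₁ ∧
      herm σ w₀ w₀ = 0 ∧ herm σ w₁ w₁ = 0 ∧
      herm σ w₀ w₁ = π⁻¹ ∧ herm σ w₁ w₀ = -π⁻¹) := by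

  -- basic valuation facts
  have hπinv : π⁻¹ ≠ 0 := inv_ne_zero hπ
  have hv1 : v 1 = 0 := by
    have h := hvmul 1 1 one_ne_zero one_ne_zero
    rw [one_mul] at h; omega
  have hvneg1 : v (-1 : F) = 0 := by
    have h := hvmul (-1) (-1) (by norm_num) (by norm_num)
    rw [neg_mul_neg, one_mul, hv1] at h; omega
  have hvneg : ∀ x : F, x ≠ 0 → v (-x) = v x := by
    intro x hx
    have h := hvmul (-1) x (by norm_num) hx
    rw [neg_one_mul] at h; omega
  have hvinv : ∀ x : F, x ≠ 0 → v x⁻¹ = -(v x) := by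
    intro x hx
    have h := hvmul x x⁻¹ hx (inv_ne_zero hx)
    rw [mul_inv_cancel₀ hx, hv1] at h; omega
  have hOadd : ∀ x y : F, inO v x → inO v y → inO v (x + y) := by
    intro x y hx hy
    by_cases hx0 : x = 0; · simpa [hx0] using hy
    by_cases hy0 : y = 0; · simpa [hy0] using hx
    by_cases hxy : x + y = 0; · exact Or.inl hxy
    rcases hx with rfl | hx; · exact absurd rfl hx0
    rcases hy with rfl | hy; · exact absurd rfl hy0
    exact Or.inr (le_trans (le_min hx hy) (hvadd x y hx0 hy0 hxy))
  have hOmul : ∀ x y : F, inO v x → inO v y → inO v (x * y) := by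
    intro x y hx hy
    by_cases hx0 : x = 0; · simp [hx0, inO]
    by_cases hy0 : y = 0; · simp [hy0, inO]
    rcases hx with rfl | hx; · exact absurd rfl hx0
    rcases hy with rfl | hy; · exact absurd rfl hy0
    exact Or.inr (by rw [hvmul x y hx0 hy0]; omega)
  have hOneg : ∀ x : F, inO v x → inO v (-x) := by
    intro x hx
    by_cases hx0 : x = 0; · simp [hx0, inO]
    rcases hx with rfl | hx; · exact absurd rfl hx0
    exact Or.inr (by rw [hvneg x hx0]; exact hx)
  have hOσ : ∀ x : F, inO v x → inO v (σ x) := by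
    intro x hx
    rcases hx with rfl | hx; · simp [inO]
    exact Or.inr (by rw [hvσ]; exact hx)
  have hO1 : inO v (1 : F) := Or.inr (by simp [hv1])
  -- lattice setup
  obtain ⟨hlat, hdual⟩ := hΛ
  obtain ⟨u, w, hLIuw, hΛeq⟩ := hlat
  have hΛcomb : ∀ x ∈ Λ, ∀ y ∈ Λ, ∀ a c : F, inO v a → inO v c → a • x + c • y ∈ Λ := by
    intro x hx y hy a c ha hc
    rw [hΛeq] at hx hy ⊢
    exact spanL_comb v hOadd hOmul hx hy ha hc
  have factA : ∀ x ∈ Λ, ∀ y ∈ Λ, inO v (π * herm σ x y) := by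
    intro x hx y hy
    have hx' : π • x ∈ dualL σ v Λ := by rw [hdual]; exact ⟨x, hx, rfl⟩
    have h := hx' y hy
    rwa [herm_smul_left] at h
  -- extend b to a basis of Λ
  have hbin' := hbin
  rw [hΛeq] at hbin'
  obtain ⟨a, c, ha, hc, hbeq⟩ := hbin'
  have hdetuw : u.1 * w.2 - u.2 * w.1 ≠ 0 := (linIndep_iff_det u w).1 hLIuw
  have hprim : (a ≠ 0 ∧ v a = 0) ∨ (c ≠ 0 ∧ v c = 0) := by
    by_contra hcon
    push_neg at hcon
    have hA : inO v (π⁻¹ * a) := by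
      by_cases ha0 : a = 0; · exact Or.inl (by rw [ha0, mul_zero])
      have hva : v a ≠ 0 := hcon.1 ha0
      have hva' : 0 ≤ v a := ha.resolve_left ha0
      refine Or.inr ?_
      rw [hvmul _ _ hπinv ha0, hvinv _ hπ, hvπ]; omega
    have hB : inO v (π⁻¹ * c) := by
      by_cases hc0 : c = 0; · exact Or.inl (by rw [hc0, mul_zero])
      have hvc : v c ≠ 0 := hcon.2 hc0
      have hvc' : 0 ≤ v c := hc.resolve_left hc0
      refine Or.inr ?_
      rw [hvmul _ _ hπinv hc0, hvinv _ hπ, hvπ]; omega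
    refine hbout ⟨(π⁻¹ * a) • u + (π⁻¹ * c) • w, ?_, ?_⟩
    · rw [hΛeq]; exact ⟨_, _, hA, hB, rfl⟩
    · show π • ((π⁻¹ * a) • u + (π⁻¹ * c) • w) = b
      rw [hbeq]
      match_scalars <;> field_simp
  obtain ⟨e, hLIbe, hspan⟩ : ∃ e, LinearIndependent F ![b, e] ∧ Λ = spanL v b e := by
    rcases hprim with ⟨ha0, hva⟩ | ⟨hc0, hvc⟩
    · refine ⟨w, ?_, ?_⟩
      · refine (linIndep_iff_det b w).2 ?_
        have hb1 : b.1 = a * u.1 + c * w.1 := by rw [hbeq]; simp [smul_eq_mul]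
        have hb2 : b.2 = a * u.2 + c * w.2 := by rw [hbeq]; simp [smul_eq_mul]
        rw [hb1, hb2]
        intro hz
        exact mul_ne_zero ha0 hdetuw (by linear_combination hz)
      · rw [hΛeq, spanL_change v hOadd hOmul hOneg ha
          (Or.inr (by rw [hvinv _ ha0, hva]; norm_num)) ha0 hc, ← hbeq]
    · refine ⟨u, ?_, ?_⟩
      · refine (linIndep_iff_det b u).2 ?_
        have hb1 : b.1 = a * u.1 + c * w.1 := by rw [hbeq]; simp [smul_eq_mul]
        have hb2 : b.2 = a * u.2 + c * w.2 := by rw [hbeq]; simp [smul_eq_mul]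
        rw [hb1, hb2]
        intro hz
        exact mul_ne_zero hc0 hdetuw (by linear_combination -hz)
      · have hbeq' : b = c • w + a • u := by rw [hbeq]; module
        rw [hΛeq, spanL_swap, spanL_change v hOadd hOmul hOneg hc
          (Or.inr (by rw [hvinv _ hc0, hvc]; norm_num)) hc0 ha, ← hbeq']
  have hbmem : b ∈ Λ := hbin
  have hemem : e ∈ Λ := by
    rw [hspan]; exact ⟨0, 1, Or.inl rfl, hO1, by module⟩
  -- the pairing with e
  obtain ⟨c₀, hc₀def⟩ : ∃ x : F, x = herm σ b e := ⟨_, rfl⟩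
  have hπc₀ : inO v (π * c₀) := by rw [hc₀def]; exact factA b hbmem e hemem
  have hnotO : ¬ inO v c₀ := by
    intro hO
    apply hbout
    rw [← hdual]
    intro y hy
    rw [hspan] at hy
    obtain ⟨α, β, hα, hβ, rfl⟩ := hy
    rw [herm_add_right, herm_smul_right, herm_smul_right, hiso, mul_zero, zero_add, ← hc₀def]
    exact hOmul _ _ (hOσ β hβ) hO
  have hc₀0 : c₀ ≠ 0 := fun h => hnotO (Or.inl h)
  have hvc₀ : v c₀ = -1 := by
    have h1 : v (π * c₀) = 1 + v c₀ := by rw [hvmul π c₀ hπ hc₀0, hvπ]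
    have h2 : ¬ (0 ≤ v c₀) := fun h => hnotO (Or.inr h)
    rcases hπc₀ with h | h
    · exact absurd h (mul_ne_zero hπ hc₀0)
    · omega
  have hσc₀ : σ c₀ ≠ 0 := by simpa [map_eq_zero] using hc₀0
  -- rescale e
  obtain ⟨t₀, ht₀def⟩ : ∃ x : F, x = -((σ c₀)⁻¹ * π⁻¹) := ⟨_, rfl⟩
  have ht₀0 : t₀ ≠ 0 := by
    rw [ht₀def]
    exact neg_ne_zero.2 (mul_ne_zero (inv_ne_zero hσc₀) hπinv)
  have hvt₀ : v t₀ = 0 := by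
    have h1 := hvmul ((σ c₀)⁻¹) π⁻¹ (inv_ne_zero hσc₀) hπinv
    have h2 := hvinv _ hσc₀
    have h3 := hvinv _ hπ
    have h4 := hvσ c₀
    have h5 := hvneg _ (mul_ne_zero (inv_ne_zero hσc₀) hπinv)
    rw [ht₀def]; omega
  have hOt₀ : inO v t₀ := Or.inr (by rw [hvt₀])
  obtain ⟨b₁, hb₁def⟩ : ∃ x : F × F, x = t₀ • e := ⟨_, rfl⟩
  have hb₁mem : b₁ ∈ Λ := by
    rw [hspan, hb₁def]; exact ⟨0, t₀, Or.inl rfl, hOt₀, by module⟩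
  have hbb₁ : herm σ b b₁ = π⁻¹ := by
    rw [hb₁def, herm_smul_right, ← hc₀def, ht₀def]
    rw [map_neg, map_mul, map_inv₀, map_inv₀, hinv, hσπ, hc₀def]
    have hne : herm σ b e ≠ 0 := by rw [← hc₀def]; exact hc₀0
    field_simp
  have hb₁b : herm σ b₁ b = -π⁻¹ := by
    rw [herm_conj σ hinv b b₁, hbb₁, map_inv₀, hσπ, inv_neg]
  -- self pairing of b₁
  obtain ⟨d, hddef⟩ : ∃ x : F, x = herm σ b₁ b₁ := ⟨_, rfl⟩
  have hσd : σ d = d := by rw [hddef]; exact (herm_conj σ hinv b₁ b₁).symm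
  have hπd : inO v (π * d) := by rw [hddef]; exact factA b₁ hb₁mem b₁ hb₁mem
  have hOd : inO v d := by
    by_cases hd0 : d = 0; · exact Or.inl hd0
    obtain ⟨k, hk⟩ := heven d hσd hd0
    have h1 : v (π * d) = 1 + v d := by rw [hvmul _ _ hπ hd0, hvπ]
    rcases hπd with h | h
    · exact absurd h (mul_ne_zero hπ hd0)
    · exact Or.inr (by omega)
  -- the correction term
  obtain ⟨t, htdef⟩ : ∃ x : F, x = -(π * d / 2) := ⟨_, rfl⟩
  have hOt : inO v t := by
    by_cases hd0 : d = 0; · exact Or.inl (by rw [htdef, hd0]; ring)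
    have hπd0 : π * d ≠ 0 := mul_ne_zero hπ hd0
    have h1 := hvmul (π * d) 2⁻¹ hπd0 (inv_ne_zero h2)
    have h2' := hvinv 2 h2
    have h3 := hvmul π d hπ hd0
    have h4 := hvneg (π * d * 2⁻¹) (mul_ne_zero hπd0 (inv_ne_zero h2))
    have hvd : 0 ≤ v d := hOd.resolve_left hd0
    refine Or.inr ?_
    rw [htdef, div_eq_mul_inv]
    omega
  have hσt : σ t = π * d / 2 := by
    rw [htdef, map_neg, map_div₀, map_mul, hσπ, hσd, map_ofNat]
    ring
  obtain ⟨b', hb'def⟩ : ∃ x : F × F, x = b₁ + t • b := ⟨_, rfl⟩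
  have hb'mem : b' ∈ Λ := by
    rw [hspan, hb'def, hb₁def]; exact ⟨t, t₀, hOt, hOt₀, by module⟩
  have key1 : herm σ b b' = π⁻¹ := by
    rw [hb'def, herm_add_right, herm_smul_right, hiso, mul_zero, add_zero, hbb₁]
  have key2 : herm σ b' b' = 0 := by
    rw [hb'def]
    simp only [herm_add_left, herm_add_right, herm_smul_left, herm_smul_right]
    rw [← hddef, hb₁b, hbb₁, hiso, hσt, htdef]
    field_simp
    ring
  -- the universal statement
  have main2 : ∀ b' ∈ Λ, herm σ b' b' = 0 → herm σ b b' = π⁻¹ →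
      LinearIndependent F ![b, b'] ∧ Λ = spanL v b b' := by
    intro z hz hzz hbz
    have hz0 : z ≠ 0 := by
      rintro rfl; rw [herm_zero_right] at hbz; exact hπinv hbz.symm
    have hzb : herm σ z b = -π⁻¹ := by
      rw [herm_conj σ hinv b z, hbz, map_inv₀, hσπ, inv_neg]
    have hLI : LinearIndependent F ![b, z] := by
      rw [LinearIndependent.pair_iff]
      intro s t hst
      have h1 : herm σ (s • b + t • z) z = 0 := by rw [hst, herm_zero_left]
      rw [herm_add_left, herm_smul_left, herm_smul_left, hbz, hzz] at h1
      have hs : s = 0 := by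
        have hh : s * π⁻¹ = 0 := by linear_combination h1
        rcases mul_eq_zero.1 hh with h | h
        · exact h
        · exact absurd h hπinv
      subst hs
      rw [zero_smul, zero_add] at hst
      rcases smul_eq_zero.1 hst with h | h
      · exact ⟨rfl, h⟩
      · exact absurd h hz0
    refine ⟨hLI, ?_⟩
    have hdet : b.1 * z.2 - b.2 * z.1 ≠ 0 := (linIndep_iff_det b z).1 hLI
    ext x
    constructor
    · intro hx
      obtain ⟨α, β, hrepr⟩ := repr_det hdet x
      have hxz : herm σ x z = α * π⁻¹ := by
        rw [hrepr, herm_add_left, herm_smul_left, herm_smul_left, hbz, hzz]; ring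
      have hxb : herm σ x b = -(β * π⁻¹) := by
        rw [hrepr, herm_add_left, herm_smul_left, herm_smul_left, hiso, hzb]; ring
      have hα : α = π * herm σ x z := by rw [hxz]; field_simp
      have hβ : β = -(π * herm σ x b) := by rw [hxb]; field_simp
      exact ⟨α, β, by rw [hα]; exact factA x hx z hz,
        by rw [hβ]; exact hOneg _ (factA x hx b hbmem), hrepr⟩
    · rintro ⟨a', c', ha', hc', rfl⟩
      exact hΛcomb b hbmem z hz a' c' ha' hc'
  refine ⟨⟨b', hb'mem, key2, key1⟩, main2, ?_⟩
  obtain ⟨hLI, hsp⟩ := main2 b' hb'mem key2 key1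
  refine ⟨b, b', hLI, hsp, hiso, key2, key1, ?_⟩
  rw [herm_conj σ hinv b b', key1, map_inv₀, hσπ, inv_neg]
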